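/- Let X be a Banach space, M and N closed subspaces with closure(M+N) = X, and suppose M and N have a common complement in X. Then there exist a bounded linear operator S : X → X with S² = I and S(M) = N, and a constant C > 0 with ‖x + Sx‖ ≥ C‖x‖ for all x ∈ M. -/

import Mathlib

theorem stmt_17 {X : Type*} [NormedAddCommGroup X] [NormedSpace ℝ X] [CompleteSpace X]
    (M N : Submodule ℝ X) (hM : IsClosed (M : Set X)) (hN : IsClosed (N : Set X))
    (hdense : Dense ((M ⊔ N : Submodule ℝ X) : Set X))
    (h : ∃ K : Submodule ℝ X, IsClosed (K : Set X) ∧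
        M ⊓ K = ⊥ ∧ M ⊔ K = ⊤ ∧ N ⊓ K = ⊥ ∧ N ⊔ K = ⊤) :
    ∃ (S : X →L[ℝ] X) (C : ℝ), S ∘L S = ContinuousLinearMap.id ℝ X ∧
      Submodule.map (S : X →ₗ[ℝ] X) M = N ∧ 0 < C ∧ ∀ x ∈ M, C * ‖x‖ ≤ ‖x + S x‖ := by
  obtain ⟨K, hK, hMK0, hMKsup, hNK0, hNKsup⟩ := h
  have hMK : IsCompl M K := ⟨disjoint_iff.2 hMK0, codisjoint_iff.2 hMKsup⟩
  have hNK : IsCompl N K := ⟨disjoint_iff.2 hNK0, codisjoint_iff.2 hNKsup⟩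
  set P : X →L[ℝ] X := M.subtypeL ∘L M.linearProjOfClosedCompl K hMK hM hK with hP
  set Q : X →L[ℝ] X := N.subtypeL ∘L N.linearProjOfClosedCompl K hNK hN hK with hQ
  have hPmem : ∀ x, P x ∈ M := fun x => (M.linearProjOfClosedCompl K hMK hM hK x).2
  have hQmem : ∀ x, Q x ∈ N := fun x => (N.linearProjOfClosedCompl K hNK hN hK x).2
  have hPleft : ∀ x ∈ M, P x = x := fun x hx => by
    have := Submodule.linearProjOfIsCompl_apply_left hMK ⟨x, hx⟩
    exact congrArg Subtype.val (Submodule.projectionOnto_apply_of_mem_left hMK hx)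
  have hQleft : ∀ x ∈ N, Q x = x := fun x hx => by
    have := Submodule.linearProjOfIsCompl_apply_left hNK ⟨x, hx⟩
    exact congrArg Subtype.val (Submodule.projectionOnto_apply_of_mem_left hNK hx)
  have hPK : ∀ x ∈ K, P x = 0 := fun x hx => by
    have := Submodule.projectionOnto_apply_of_mem_right hMK hx
    exact congrArg Subtype.val this
  have hQK : ∀ x ∈ K, Q x = 0 := fun x hx => by
    have := Submodule.projectionOnto_apply_of_mem_right hNK hx
    exact congrArg Subtype.val this
  have hxPK : ∀ x, x - P x ∈ K := fun x => by
    have h1 := Submodule.projection_add_projection_eq_self hMK x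
    have h2 : x - P x = (K.linearProjOfIsCompl M hMK.symm x : X) := by
      have : (P x : X) = (M.linearProjOfIsCompl K hMK x : X) := rfl
      rw [this]; exact sub_eq_of_eq_add' h1.symm
    rw [h2]; exact (K.linearProjOfIsCompl M hMK.symm x).2
  have hxQK : ∀ x, x - Q x ∈ K := fun x => by
    have h1 := Submodule.projection_add_projection_eq_self hNK x
    have h2 : x - Q x = (K.linearProjOfIsCompl N hNK.symm x : X) := by
      have : (Q x : X) = (N.linearProjOfIsCompl K hNK x : X) := rfl
      rw [this]; exact sub_eq_of_eq_add' h1.symm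
    rw [h2]; exact (K.linearProjOfIsCompl N hNK.symm x).2
  have hQP : ∀ x, Q (P x) = Q x := fun x => by
    have h0 : Q (x - P x) = 0 := hQK _ (hxPK x)
    have : Q x - Q (P x) = 0 := by rw [← map_sub]; exact h0
    have := sub_eq_zero.mp this; exact this.symm
  have hPQ : ∀ x, P (Q x) = P x := fun x => by
    have h0 : P (x - Q x) = 0 := hPK _ (hxQK x)
    have : P x - P (Q x) = 0 := by rw [← map_sub]; exact h0
    have := sub_eq_zero.mp this; exact this.symm
  set S : X →L[ℝ] X := P + Q - ContinuousLinearMap.id ℝ X with hS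
  have hSapp : ∀ x, S x = P x + Q x - x := fun x => by simp [hS]
  have hSM : ∀ x ∈ M, S x = Q x := fun x hx => by rw [hSapp, hPleft x hx]; abel
  refine ⟨S, 2 / (‖P‖ + 1), ?_, ?_, ?_, ?_⟩
  · ext x
    have hPP : P (P x) = P x := hPleft _ (hPmem x)
    have hQQ : Q (Q x) = Q x := hQleft _ (hQmem x)
    simp only [ContinuousLinearMap.comp_apply, ContinuousLinearMap.id_apply]
    rw [hSapp, hSapp]
    simp only [map_add, map_sub, hPP, hQQ, hQP, hPQ]
    abel
  · apply le_antisymm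
    · rintro y ⟨m, hm, rfl⟩
      rw [ContinuousLinearMap.coe_coe, hSM m hm]; exact hQmem m
    · intro n hn
      refine ⟨P n, hPmem n, ?_⟩
      rw [ContinuousLinearMap.coe_coe, hSM _ (hPmem n), hQP, hQleft n hn]
  · positivity
  · intro x hx
    have hxS : x + S x = x + Q x := by rw [hSM x hx]
    have hPx : P (x + S x) = x + x := by
      rw [hxS, map_add, hPQ, hPleft x hx]
    have h2 : 2 * ‖x‖ = ‖P (x + S x)‖ := by
      rw [hPx, ← two_smul ℝ x, norm_smul]; simp
    have hb : ‖P (x + S x)‖ ≤ ‖P‖ * ‖x + S x‖ := P.le_opNorm _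
    have hle : ‖P‖ * ‖x + S x‖ ≤ (‖P‖ + 1) * ‖x + S x‖ := by
      apply mul_le_mul_of_nonneg_right (by linarith) (norm_nonneg _)
    have hpos : (0:ℝ) < ‖P‖ + 1 := by positivity
    rw [div_mul_eq_mul_div, div_le_iff₀ hpos]
    calc 2 * ‖x‖ = ‖P (x + S x)‖ := h2
      _ ≤ (‖P‖ + 1) * ‖x + S x‖ := le_trans hb hle
      _ = ‖x + S x‖ * (‖P‖ + 1) := mul_comm _ _
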